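/- Let k be an algebraically closed field of characteristic zero, A a finitely generated commutative k-algebra, and G a finite group acting on A by k-algebra automorphisms. Let 0 → E' → E → E'' → 0 be a degreewise short exact sequence of bounded-above cochain complexes of finitely generated projective A-modules, with G-equivariant structures on all terms and all maps (differentials and the maps of complexes) G-equivariant. Say that such a complex C satisfies condition (T) if for every maximal ideal n of A and every integer j the stabilizer G_n acts trivially on H^j(C ⊗_A A/n). If two of the three complexes E', E, E'' satisfy condition (T), then so does the third. -/
import Mathlib


/-!
STATEMENT 17: over an algebraically closed field `k` of characteristic zero,
let `G` be a finite group acting on a finitely generated commutative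
`k`-algebra `A`, and let `0 → E₁ → E₂ → E₃ → 0` be a degreewise short exact
sequence of bounded-above `G`-equivariant cochain complexes of finitely
generated projective `A`-modules (all maps `G`-equivariant).  Say a complex
`C` satisfies condition (T) if for every maximal ideal `n` of `A` and every
`j` the stabilizer `G_n` acts trivially on `H^j(C ⊗[A] A/n)`.  If two of
`E₁`, `E₂`, `E₃` satisfy (T), so does the third.

`H^j(C ⊗[A] A/n)` is computed from the termwise fibers `C^j/nC^j` (the terms
are flat); "`g` fixes the class of a mod-`n` cocycle `x`" is expressed as
`g • x - x ∈ range(d^{j-1}) ⊔ n • ⊤`.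
-/

open TensorProduct

universe u v w

/-- A (`ℤ`-indexed, cohomologically graded) cochain complex of `R`-modules,
with differentials indexed by pairs `(i, j)` with `i + 1 = j`. -/
structure ModComplex.{s, r} (R : Type s) [Ring R] : Type (max s (r + 1)) where
  X : ℤ → Type r
  [acg : ∀ j, AddCommGroup (X j)]
  [mod : ∀ j, Module R (X j)]
  d : ∀ i j : ℤ, i + 1 = j → (X i →ₗ[R] X j)
  d_comp_d : ∀ (i j l : ℤ) (hij : i + 1 = j) (hjl : j + 1 = l) (x : X i),
    d j l hjl (d i j hij x) = 0

attribute [instance] ModComplex.acg ModComplex.mod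

/-- A `G`-equivariant cochain complex of `A`-modules: each term carries a
`G`-action compatible with the `G`-action on `A`, and the differentials are
`G`-equivariant. -/
structure EqvModComplex.{s, t, r} (A : Type s) (G : Type t) [CommRing A]
    [Group G] [MulSemiringAction G A] : Type (max s t (r + 1)) where
  X : ℤ → Type r
  [acg : ∀ j, AddCommGroup (X j)]
  [mod : ∀ j, Module A (X j)]
  [act : ∀ j, DistribMulAction G (X j)]
  equivariant : ∀ (j : ℤ) (g : G) (a : A) (x : X j),
    g • (a • x) = (g • a) • (g • x)
  d : ∀ i j : ℤ, i + 1 = j → (X i →ₗ[A] X j)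
  d_comp_d : ∀ (i j l : ℤ) (hij : i + 1 = j) (hjl : j + 1 = l) (x : X i),
    d j l hjl (d i j hij x) = 0
  d_equivariant : ∀ (i j : ℤ) (h : i + 1 = j) (g : G) (x : X i),
    d i j h (g • x) = g • d i j h x

attribute [instance] EqvModComplex.acg EqvModComplex.mod EqvModComplex.act


section AuxLemmas

variable {A : Type*} [CommRing A]

lemma aux_smul_top_map {M M' : Type*} [AddCommGroup M] [Module A M]
    [AddCommGroup M'] [Module A M'] (f : M →ₗ[A] M') (n : Ideal A) {x : M}
    (hx : x ∈ n • (⊤ : Submodule A M)) : f x ∈ n • (⊤ : Submodule A M') := by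
  refine Submodule.smul_induction_on hx (fun a ha m _ => ?_) (fun u v hu hv => ?_)
  · rw [map_smul]; exact Submodule.smul_mem_smul ha trivial
  · rw [map_add]; exact Submodule.add_mem _ hu hv

lemma aux_smul_top_gsmul {G : Type*} [Group G] [MulSemiringAction G A]
    {M : Type*} [AddCommGroup M] [Module A M] [DistribMulAction G M]
    (hc : ∀ (g : G) (a : A) (x : M), g • (a • x) = (g • a) • (g • x))
    (n : Ideal A) (g : G) (hg : ∀ a : A, g • a ∈ n ↔ a ∈ n)
    {x : M} (hx : x ∈ n • (⊤ : Submodule A M)) : g • x ∈ n • (⊤ : Submodule A M) := by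
  refine Submodule.smul_induction_on hx (fun a ha m _ => ?_) (fun u v hu hv => ?_)
  · rw [hc]; exact Submodule.smul_mem_smul ((hg a).mpr ha) trivial
  · rw [smul_add]; exact Submodule.add_mem _ hu hv

lemma aux_exists_retraction {M₁ M₂ M₃ : Type*} [AddCommGroup M₁] [Module A M₁]
    [AddCommGroup M₂] [Module A M₂] [AddCommGroup M₃] [Module A M₃]
    (α : M₁ →ₗ[A] M₂) (β : M₂ →ₗ[A] M₃) (s : M₃ →ₗ[A] M₂)
    (hs : ∀ x, β (s x) = x) (hinj : Function.Injective α)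
    (hexact : LinearMap.range α = LinearMap.ker β) :
    ∃ ρ : M₂ →ₗ[A] M₁, (∀ x, ρ (α x) = x) ∧ (∀ x, α (ρ x) = x - s (β x)) := by
  have hmem : ∀ x : M₂, x - s (β x) ∈ LinearMap.range α := by
    intro x
    rw [hexact, LinearMap.mem_ker, map_sub, hs, sub_self]
  let e := LinearEquiv.ofInjective α hinj
  let ρ : M₂ →ₗ[A] M₁ := e.symm.toLinearMap.comp
    (LinearMap.codRestrict (LinearMap.range α) (LinearMap.id - s.comp β) hmem)
  have hαρ : ∀ x, α (ρ x) = x - s (β x) := by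
    intro x
    have h1 : α (ρ x) = (e (ρ x) : M₂) := (LinearEquiv.ofInjective_apply α (ρ x)).symm
    have h2 : ρ x = e.symm ((LinearMap.codRestrict (LinearMap.range α)
        (LinearMap.id - s.comp β) hmem) x) := rfl
    rw [h1, h2, LinearEquiv.apply_symm_apply]
    rfl
  refine ⟨ρ, fun x => ?_, hαρ⟩
  apply hinj
  rw [hαρ]
  have : β (α x) = 0 := by
    rw [← LinearMap.mem_ker, ← hexact]; exact LinearMap.mem_range_self α x
  rw [this, map_zero, sub_zero]

lemma aux_key {k : Type*} [Field k] [CharZero k] [Algebra k A]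
    {M : Type*} [AddCommGroup M] [Module A M] (R : Submodule A M)
    (T : M →+ M) (m : ℕ) (hm : 0 < m) (hTm : ∀ y : M, T^[m] y = y)
    (hR : ∀ y ∈ R, T y ∈ R) (x : M)
    (h2 : T (T x) - T x - (T x - x) ∈ R) : T x - x ∈ R := by
  set D := T x - x with hD
  have hstep : ∀ r : ℕ, T^[r] x - x - r • D ∈ R := by
    intro r
    induction r with
    | zero => simp
    | succ r ih =>
      have h1 : T (T^[r] x - x - r • D) ∈ R := hR _ ih
      have hexp : T^[r+1] x - x - (r+1) • D
          = T (T^[r] x - x - r • D) + r • (T (T x) - T x - (T x - x)) := by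
        simp only [Function.iterate_succ_apply', map_sub, map_nsmul, hD, succ_nsmul,
          nsmul_sub]
        abel
      rw [hexp]
      exact add_mem h1 (nsmul_mem h2 r)
  have hm' := hstep m
  rw [hTm x] at hm'
  have hmD : m • D ∈ R := by
    have := R.neg_mem hm'
    simpa using this
  have hm0 : ((m : k)) ≠ 0 := Nat.cast_ne_zero.mpr hm.ne'
  have hDval : (algebraMap k A ((m : k)⁻¹)) • (m • D) = D := by
    rw [← Nat.cast_smul_eq_nsmul A m D, smul_smul, ← map_natCast (algebraMap k A) m,
      ← map_mul, inv_mul_cancel₀ hm0, map_one, one_smul]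
  rw [← hDval]
  exact R.smul_mem _ hmD

end AuxLemmas

section ComplexAux

variable {A : Type u} [CommRing A] {G : Type w} [Group G] [MulSemiringAction G A]

lemma range_d_eq (E : EqvModComplex.{u, w, v} A G) {i i' j : ℤ}
    (h : i + 1 = j) (h' : i' + 1 = j) :
    LinearMap.range (E.d i j h) = LinearMap.range (E.d i' j h') := by
  obtain rfl : i = i' := by omega
  rfl

lemma mem_smul_top_d_congr (E : EqvModComplex.{u, w, v} A G) {i j j' : ℤ}
    (h : i + 1 = j) (h' : i + 1 = j') (n : Ideal A) (y : E.X i)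
    (hy : E.d i j h y ∈ n • (⊤ : Submodule A (E.X j))) :
    E.d i j' h' y ∈ n • (⊤ : Submodule A (E.X j')) := by
  obtain rfl : j = j' := by omega
  exact hy

lemma aux_pow_smul {M : Type*} [AddCommGroup M] [DistribMulAction G M]
    [Finite G] (g : G) (y : M) :
    (⇑(DistribMulAction.toAddMonoidHom M g))^[orderOf g] y = y := by
  show (fun z : M => g • z)^[orderOf g] y = y
  rw [smul_iterate g (orderOf g)]
  simp [pow_orderOf_eq_one]

end ComplexAux

/-- Condition (T): for every maximal ideal `n ⊆ A` and every `j`, the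
stabilizer `G_n` acts trivially on `H^j(E ⊗[A] A/n)`. -/
def TrivialStabilizerActionOnFiberCohomology
    (A : Type u) [CommRing A] (G : Type w) [Group G] [MulSemiringAction G A]
    (E : EqvModComplex.{u, w, v} A G) : Prop :=
  ∀ n : Ideal A, n.IsMaximal → ∀ (j : ℤ) (x : E.X j),
    E.d j (j+1) rfl x ∈ n • (⊤ : Submodule A (E.X (j+1))) →
    ∀ g : G, (∀ a : A, g • a ∈ n ↔ a ∈ n) →
      g • x - x ∈ LinearMap.range (E.d (j-1) j (by omega)) ⊔
        n • (⊤ : Submodule A (E.X j))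

/-- **Two-out-of-three for condition (T)** along a degreewise short exact
sequence of `G`-equivariant complexes. -/
theorem two_out_of_three_trivial_stabilizer_action
    (k : Type*) [Field k] [CharZero k] [IsAlgClosed k]
    (A : Type u) [CommRing A] [Algebra k A] [Algebra.FiniteType k A]
    (G : Type w) [Group G] [Finite G] [MulSemiringAction G A] [SMulCommClass G k A]
    (E₁ E₂ E₃ : EqvModComplex.{u, w, v} A G)
    (hproj₁ : ∀ j, Module.Projective A (E₁.X j))
    (hproj₂ : ∀ j, Module.Projective A (E₂.X j))
    (hproj₃ : ∀ j, Module.Projective A (E₃.X j))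
    (hfin₁ : ∀ j, Module.Finite A (E₁.X j))
    (hfin₂ : ∀ j, Module.Finite A (E₂.X j))
    (hfin₃ : ∀ j, Module.Finite A (E₃.X j))
    (hbdd₁ : ∃ b : ℤ, ∀ j, b < j → ∀ x : E₁.X j, x = 0)
    (hbdd₂ : ∃ b : ℤ, ∀ j, b < j → ∀ x : E₂.X j, x = 0)
    (hbdd₃ : ∃ b : ℤ, ∀ j, b < j → ∀ x : E₃.X j, x = 0)
    (α : ∀ j, E₁.X j →ₗ[A] E₂.X j) (β : ∀ j, E₂.X j →ₗ[A] E₃.X j)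
    -- chain maps
    (hα : ∀ (i j : ℤ) (h : i + 1 = j) (x : E₁.X i),
      α j (E₁.d i j h x) = E₂.d i j h (α i x))
    (hβ : ∀ (i j : ℤ) (h : i + 1 = j) (x : E₂.X i),
      β j (E₂.d i j h x) = E₃.d i j h (β i x))
    -- G-equivariance of the maps
    (hαG : ∀ (j : ℤ) (g : G) (x : E₁.X j), α j (g • x) = g • α j x)
    (hβG : ∀ (j : ℤ) (g : G) (x : E₂.X j), β j (g • x) = g • β j x)
    -- degreewise short exactness
    (hinj : ∀ j, Function.Injective (α j))
    (hsurj : ∀ j, Function.Surjective (β j))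
    (hexact : ∀ j, LinearMap.range (α j) = LinearMap.ker (β j)) :
    (TrivialStabilizerActionOnFiberCohomology A G E₁ ∧
        TrivialStabilizerActionOnFiberCohomology A G E₂ →
      TrivialStabilizerActionOnFiberCohomology A G E₃) ∧
    (TrivialStabilizerActionOnFiberCohomology A G E₁ ∧
        TrivialStabilizerActionOnFiberCohomology A G E₃ →
      TrivialStabilizerActionOnFiberCohomology A G E₂) ∧
    (TrivialStabilizerActionOnFiberCohomology A G E₂ ∧
        TrivialStabilizerActionOnFiberCohomology A G E₃ →
      TrivialStabilizerActionOnFiberCohomology A G E₁) := by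
  classical
  have hsex : ∀ j : ℤ, ∃ s : E₃.X j →ₗ[A] E₂.X j, ∀ x, β j (s x) = x := by
    intro j
    haveI := hproj₃ j
    obtain ⟨s, hs⟩ := Module.projective_lifting_property (β j) LinearMap.id (hsurj j)
    exact ⟨s, fun x => by simpa using LinearMap.ext_iff.mp hs x⟩
  choose s hs using hsex
  have hρex : ∀ j : ℤ, ∃ ρ : E₂.X j →ₗ[A] E₁.X j,
      (∀ x, ρ (α j x) = x) ∧ (∀ x, α j (ρ x) = x - s j (β j x)) :=
    fun j => aux_exists_retraction (α j) (β j) (s j) (hs j) (hinj j) (hexact j)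
  choose ρ hρ1 hρ2 using hρex
  have hβα : ∀ (p : ℤ) (u : E₁.X p), β p (α p u) = 0 := by
    intro p u
    have : α p u ∈ LinearMap.ker (β p) := (hexact p) ▸ LinearMap.mem_range_self _ u
    exact this
  refine ⟨?_, ?_, ?_⟩
  -- Case 1 : (T) for E₁ and E₂ implies (T) for E₃
  · rintro ⟨hT1, hT2⟩
    intro n hn j x hx g hg
    have pf : j - 1 + 1 = j := by omega
    have hgN2 : ∀ {p : ℤ} {y : E₂.X p}, y ∈ n • (⊤ : Submodule A (E₂.X p)) →
        g • y ∈ n • (⊤ : Submodule A (E₂.X p)) :=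
      fun {p y} hy => aux_smul_top_gsmul (fun g a z => E₂.equivariant p g a z) n g hg hy
    have hgN3 : ∀ {p : ℤ} {y : E₃.X p}, y ∈ n • (⊤ : Submodule A (E₃.X p)) →
        g • y ∈ n • (⊤ : Submodule A (E₃.X p)) :=
      fun {p y} hy => aux_smul_top_gsmul (fun g a z => E₃.equivariant p g a z) n g hg hy
    have hαN : ∀ {p : ℤ} {y : E₁.X p}, α p y ∈ n • (⊤ : Submodule A (E₂.X p)) →
        y ∈ n • (⊤ : Submodule A (E₁.X p)) :=
      fun {p y} hy => hρ1 p y ▸ aux_smul_top_map (ρ p) n hy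
    have hβd : β (j+1) (E₂.d j (j+1) rfl (s j x)) = E₃.d j (j+1) rfl x := by
      rw [hβ j (j+1) rfl (s j x), hs j x]
    set w : E₁.X (j+1) := ρ (j+1) (E₂.d j (j+1) rfl (s j x)) with hw
    have hαw : α (j+1) w = E₂.d j (j+1) rfl (s j x) - s (j+1) (E₃.d j (j+1) rfl x) := by
      rw [hw, hρ2, hβd]
    have hsdxN : s (j+1) (E₃.d j (j+1) rfl x) ∈ n • (⊤ : Submodule A (E₂.X (j+1))) :=
      aux_smul_top_map _ n hx
    have hdwN : E₁.d (j+1) (j+1+1) rfl w ∈ n • (⊤ : Submodule A (E₁.X (j+1+1))) := by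
      apply hαN
      rw [hα (j+1) (j+1+1) rfl w, hαw, map_sub,
        E₂.d_comp_d j (j+1) (j+1+1) rfl rfl (s j x), zero_sub]
      exact Submodule.neg_mem _ (aux_smul_top_map _ n hsdxN)
    have hw1 := hT1 n hn (j+1) w hdwN g hg
    rw [range_d_eq E₁ (show (j+1) - 1 + 1 = j + 1 by omega) (rfl : j + 1 = j + 1)] at hw1
    obtain ⟨dv, ⟨v, rfl⟩, m₁, hm₁, hsum1⟩ := Submodule.mem_sup.mp hw1
    have hdv : E₁.d j (j+1) rfl v = g • w - w - m₁ := by rw [← hsum1]; abel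
    set y : E₂.X j := g • (s j x) - s j x - α j v with hy
    have hβy : β j y = g • x - x := by
      rw [hy, map_sub, map_sub, hβG, hs j x, hβα, sub_zero]
    have hdy : E₂.d j (j+1) rfl y
        = g • s (j+1) (E₃.d j (j+1) rfl x) - s (j+1) (E₃.d j (j+1) rfl x) + α (j+1) m₁ := by
      rw [hy, map_sub, map_sub, E₂.d_equivariant j (j+1) rfl g (s j x),
        ← hα j (j+1) rfl v, hdv, map_sub, map_sub, hαG, hαw, smul_sub]
      abel
    have hdyN : E₂.d j (j+1) rfl y ∈ n • (⊤ : Submodule A (E₂.X (j+1))) := by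
      rw [hdy]
      exact add_mem (sub_mem (hgN2 hsdxN) hsdxN) (aux_smul_top_map _ n hm₁)
    have hy2 := hT2 n hn j y hdyN g hg
    obtain ⟨dz, ⟨z, rfl⟩, m₂, hm₂, hsum2⟩ := Submodule.mem_sup.mp hy2
    have hsum2' : E₂.d (j-1) j pf z + m₂ = g • y - y := hsum2
    have h1 : β j (g • y - y) = g • (g • x) - g • x - (g • x - x) := by
      rw [map_sub, hβG, hβy, smul_sub]
    have hβ2 : g • (g • x) - g • x - (g • x - x)
        = E₃.d (j-1) j pf (β (j-1) z) + β j m₂ := by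
      rw [← h1, ← hsum2', map_add, hβ (j-1) j pf z]
    have hRg : ∀ u ∈ LinearMap.range (E₃.d (j-1) j pf) ⊔ n • (⊤ : Submodule A (E₃.X j)),
        g • u ∈ LinearMap.range (E₃.d (j-1) j pf) ⊔ n • (⊤ : Submodule A (E₃.X j)) := by
      intro u hu
      obtain ⟨du, ⟨u', rfl⟩, mu, hmu, rfl⟩ := Submodule.mem_sup.mp hu
      rw [smul_add, ← E₃.d_equivariant (j-1) j pf g u']
      exact add_mem (Submodule.mem_sup_left ⟨g • u', rfl⟩)
        (Submodule.mem_sup_right (hgN3 hmu))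
    have h2 : g • (g • x) - g • x - (g • x - x)
        ∈ LinearMap.range (E₃.d (j-1) j pf) ⊔ n • (⊤ : Submodule A (E₃.X j)) := by
      rw [hβ2]
      exact add_mem (Submodule.mem_sup_left ⟨β (j-1) z, rfl⟩)
        (Submodule.mem_sup_right (aux_smul_top_map _ n hm₂))
    exact aux_key (k := k) (LinearMap.range (E₃.d (j-1) j pf) ⊔ n • ⊤)
      (DistribMulAction.toAddMonoidHom (E₃.X j) g) (orderOf g)
      (orderOf_pos g) (aux_pow_smul g) hRg x h2
  -- Case 2 : (T) for E₁ and E₃ implies (T) for E₂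
  · rintro ⟨hT1, hT3⟩
    intro n hn j x hx g hg
    have pf : j - 1 + 1 = j := by omega
    have hgN2 : ∀ {p : ℤ} {y : E₂.X p}, y ∈ n • (⊤ : Submodule A (E₂.X p)) →
        g • y ∈ n • (⊤ : Submodule A (E₂.X p)) :=
      fun {p y} hy => aux_smul_top_gsmul (fun g a z => E₂.equivariant p g a z) n g hg hy
    have hαN : ∀ {p : ℤ} {y : E₁.X p}, α p y ∈ n • (⊤ : Submodule A (E₂.X p)) →
        y ∈ n • (⊤ : Submodule A (E₁.X p)) :=
      fun {p y} hy => hρ1 p y ▸ aux_smul_top_map (ρ p) n hy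
    have hd3 : E₃.d j (j+1) rfl (β j x) ∈ n • (⊤ : Submodule A (E₃.X (j+1))) := by
      rw [← hβ j (j+1) rfl x]
      exact aux_smul_top_map _ n hx
    have h3 := hT3 n hn j (β j x) hd3 g hg
    obtain ⟨dt, ⟨t, rfl⟩, m, hm, hsum3⟩ := Submodule.mem_sup.mp h3
    have hsum3' : E₃.d (j-1) j pf t + m = g • β j x - β j x := hsum3
    set c : E₂.X j := g • x - x - E₂.d (j-1) j pf (s (j-1) t) - s j m with hc
    have hβc : β j c = 0 := by
      rw [hc, map_sub, map_sub, map_sub, hβG, hβ (j-1) j pf (s (j-1) t), hs, hs, ← hsum3']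
      abel
    set wc := ρ j c with hwc
    have hαwc : α j wc = c := by rw [hwc, hρ2, hβc, map_zero, sub_zero]
    have hdc : E₂.d j (j+1) rfl c ∈ n • (⊤ : Submodule A (E₂.X (j+1))) := by
      have hcd : E₂.d j (j+1) rfl c
          = g • E₂.d j (j+1) rfl x - E₂.d j (j+1) rfl x - E₂.d j (j+1) rfl (s j m) := by
        rw [hc, map_sub, map_sub, map_sub, E₂.d_equivariant j (j+1) rfl g x,
          E₂.d_comp_d (j-1) j (j+1) pf rfl (s (j-1) t)]
        abel
      rw [hcd]
      exact sub_mem (sub_mem (hgN2 hx) hx) (aux_smul_top_map _ n (aux_smul_top_map _ n hm))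
    have hdwcN : E₁.d j (j+1) rfl wc ∈ n • (⊤ : Submodule A (E₁.X (j+1))) := by
      apply hαN
      rw [hα j (j+1) rfl wc, hαwc]; exact hdc
    have h1 := hT1 n hn j wc hdwcN g hg
    obtain ⟨dv, ⟨v, rfl⟩, m₁, hm₁, hsum1⟩ := Submodule.mem_sup.mp h1
    have hsum1' : E₁.d (j-1) j pf v + m₁ = g • wc - wc := hsum1
    have e1 : g • c - c = E₂.d (j-1) j pf (α (j-1) v) + α j m₁ := by
      rw [← hαwc, ← hαG, ← map_sub, ← hsum1', map_add, hα (j-1) j pf v]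
    have e3 : g • (g • x) - g • x - (g • x - x)
        = (g • c - c) + E₂.d (j-1) j pf (g • s (j-1) t - s (j-1) t)
          + (g • s j m - s j m) := by
      rw [hc]
      simp only [smul_sub, map_sub, E₂.d_equivariant]
      abel
    have hRg : ∀ u ∈ LinearMap.range (E₂.d (j-1) j pf) ⊔ n • (⊤ : Submodule A (E₂.X j)),
        g • u ∈ LinearMap.range (E₂.d (j-1) j pf) ⊔ n • (⊤ : Submodule A (E₂.X j)) := by
      intro u hu
      obtain ⟨du, ⟨u', rfl⟩, mu, hmu, rfl⟩ := Submodule.mem_sup.mp hu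
      rw [smul_add, ← E₂.d_equivariant (j-1) j pf g u']
      exact add_mem (Submodule.mem_sup_left ⟨g • u', rfl⟩)
        (Submodule.mem_sup_right (hgN2 hmu))
    have h2 : g • (g • x) - g • x - (g • x - x)
        ∈ LinearMap.range (E₂.d (j-1) j pf) ⊔ n • (⊤ : Submodule A (E₂.X j)) := by
      rw [e3, e1]
      exact add_mem (add_mem (add_mem (Submodule.mem_sup_left ⟨_, rfl⟩)
          (Submodule.mem_sup_right (aux_smul_top_map _ n hm₁)))
          (Submodule.mem_sup_left ⟨_, rfl⟩))
        (Submodule.mem_sup_right (sub_mem (hgN2 (aux_smul_top_map _ n hm))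
          (aux_smul_top_map _ n hm)))
    exact aux_key (k := k) (LinearMap.range (E₂.d (j-1) j pf) ⊔ n • ⊤)
      (DistribMulAction.toAddMonoidHom (E₂.X j) g) (orderOf g)
      (orderOf_pos g) (aux_pow_smul g) hRg x h2
  -- Case 3 : (T) for E₂ and E₃ implies (T) for E₁
  · rintro ⟨hT2, hT3⟩
    intro n hn j x hx g hg
    have pf : j - 1 + 1 = j := by omega
    have pf2 : j - 1 - 1 + 1 = j - 1 := by omega
    have hgN1 : ∀ {p : ℤ} {y : E₁.X p}, y ∈ n • (⊤ : Submodule A (E₁.X p)) →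
        g • y ∈ n • (⊤ : Submodule A (E₁.X p)) :=
      fun {p y} hy => aux_smul_top_gsmul (fun g a z => E₁.equivariant p g a z) n g hg hy
    have hgN2 : ∀ {p : ℤ} {y : E₂.X p}, y ∈ n • (⊤ : Submodule A (E₂.X p)) →
        g • y ∈ n • (⊤ : Submodule A (E₂.X p)) :=
      fun {p y} hy => aux_smul_top_gsmul (fun g a z => E₂.equivariant p g a z) n g hg hy
    have hαN : ∀ {p : ℤ} {y : E₁.X p}, α p y ∈ n • (⊤ : Submodule A (E₂.X p)) →
        y ∈ n • (⊤ : Submodule A (E₁.X p)) :=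
      fun {p y} hy => hρ1 p y ▸ aux_smul_top_map (ρ p) n hy
    have hd2 : E₂.d j (j+1) rfl (α j x) ∈ n • (⊤ : Submodule A (E₂.X (j+1))) := by
      rw [← hα j (j+1) rfl x]
      exact aux_smul_top_map _ n hx
    have h2' := hT2 n hn j (α j x) hd2 g hg
    obtain ⟨dz, ⟨z, rfl⟩, m, hm, hsum2⟩ := Submodule.mem_sup.mp h2'
    have hsum2' : E₂.d (j-1) j pf z + m = g • α j x - α j x := hsum2
    have hdz : E₂.d (j-1) j pf z = g • α j x - α j x - m := by rw [← hsum2']; abel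
    have hdβz : E₃.d (j-1) j pf (β (j-1) z) ∈ n • (⊤ : Submodule A (E₃.X j)) := by
      have hval : β j (E₂.d (j-1) j pf z) = - β j m := by
        rw [hdz, map_sub, map_sub, hβG, hβα, smul_zero]
        abel
      rw [← hβ (j-1) j pf z, hval]
      exact Submodule.neg_mem _ (aux_smul_top_map _ n hm)
    have hdβz' := mem_smul_top_d_congr E₃ pf rfl n (β (j-1) z) hdβz
    have h3 := hT3 n hn (j-1) (β (j-1) z) hdβz' g hg
    obtain ⟨dt, ⟨t, rfl⟩, m', hm', hsum3⟩ := Submodule.mem_sup.mp h3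
    have hsum3' : E₃.d (j-1-1) (j-1) pf2 t + m' = g • β (j-1) z - β (j-1) z := hsum3
    set c : E₂.X (j-1) := g • z - z - E₂.d (j-1-1) (j-1) pf2 (s (j-1-1) t) - s (j-1) m'
      with hc
    have hβc : β (j-1) c = 0 := by
      rw [hc, map_sub, map_sub, map_sub, hβG, hβ (j-1-1) (j-1) pf2 (s (j-1-1) t), hs, hs,
        ← hsum3']
      abel
    set wc := ρ (j-1) c with hwc
    have hαwc : α (j-1) wc = c := by rw [hwc, hρ2, hβc, map_zero, sub_zero]
    have hkey : α j (g • (g • x) - g • x - (g • x - x) - E₁.d (j-1) j pf wc)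
        = (g • m - m) + E₂.d (j-1) j pf (s (j-1) m') := by
      have expand : α j (g • (g • x) - g • x - (g • x - x) - E₁.d (j-1) j pf wc)
          = g • (g • α j x - α j x) - (g • α j x - α j x) - α j (E₁.d (j-1) j pf wc) := by
        simp only [map_sub, hαG, smul_sub]
      rw [expand, ← hsum2', hα (j-1) j pf wc, hαwc, hc]
      simp only [smul_add, smul_sub, map_sub, map_add, E₂.d_equivariant]
      rw [E₂.d_comp_d (j-1-1) (j-1) j pf2 pf (s (j-1-1) t)]
      abel
    have hmemN : g • (g • x) - g • x - (g • x - x) - E₁.d (j-1) j pf wc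
        ∈ n • (⊤ : Submodule A (E₁.X j)) := by
      apply hαN
      rw [hkey]
      exact add_mem (sub_mem (hgN2 hm) hm) (aux_smul_top_map _ n (aux_smul_top_map _ n hm'))
    have hRg : ∀ u ∈ LinearMap.range (E₁.d (j-1) j pf) ⊔ n • (⊤ : Submodule A (E₁.X j)),
        g • u ∈ LinearMap.range (E₁.d (j-1) j pf) ⊔ n • (⊤ : Submodule A (E₁.X j)) := by
      intro u hu
      obtain ⟨du, ⟨u', rfl⟩, mu, hmu, rfl⟩ := Submodule.mem_sup.mp hu
      rw [smul_add, ← E₁.d_equivariant (j-1) j pf g u']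
      exact add_mem (Submodule.mem_sup_left ⟨g • u', rfl⟩)
        (Submodule.mem_sup_right (hgN1 hmu))
    have h2 : g • (g • x) - g • x - (g • x - x)
        ∈ LinearMap.range (E₁.d (j-1) j pf) ⊔ n • (⊤ : Submodule A (E₁.X j)) := by
      have hsplit : g • (g • x) - g • x - (g • x - x)
          = E₁.d (j-1) j pf wc
            + (g • (g • x) - g • x - (g • x - x) - E₁.d (j-1) j pf wc) := by abel
      rw [hsplit]
      exact add_mem (Submodule.mem_sup_left ⟨wc, rfl⟩) (Submodule.mem_sup_right hmemN)
    exact aux_key (k := k) (LinearMap.range (E₁.d (j-1) j pf) ⊔ n • ⊤)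
      (DistribMulAction.toAddMonoidHom (E₁.X j) g) (orderOf g)
      (orderOf_pos g) (aux_pow_smul g) hRg x h2
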